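/- Let d, n, m ≥ 1, let a_1,…,a_m ∈ {0,1}^d and b_1,…,b_n ∈ {0,1}^d, let S(a,b) = max(0, 1 − 2·aᵀb) (ReLU of 1 − 2aᵀb), and let l : ℝ → ℝ be differentiable at 0. Define L : ℝ^n → ℝ by L(α) = Σ_{i=1}^m l(Σ_{j=1}^n α_j·S(a_i,b_j)). Then the sum of all entries of the gradient of L at α = 0 equals l'(0)·|{(i,j) ∈ {1,…,m}×{1,…,n} : a_iᵀ b_j = 0}|, i.e., l'(0) times the number of orthogonal pairs. In particular, for binary vectors a, b ∈ {0,1}^d one has max(0, 1 − 2aᵀb) = 1 if aᵀb = 0 and = 0 otherwise. -/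

import Mathlib

open Finset

lemma binary_relu (d : ℕ) (x y : Fin d → ℝ) (hx : ∀ p, x p = 0 ∨ x p = 1)
    (hy : ∀ p, y p = 0 ∨ y p = 1) :
    max 0 (1 - 2 * ∑ p, x p * y p)
      = if (∑ p, x p * y p) = 0 then (1 : ℝ) else 0 := by
  have hterm : ∀ p, x p * y p = 0 ∨ x p * y p = 1 := by
    intro p
    rcases hx p with h | h <;> rcases hy p with h' | h' <;> simp [h, h']
  have hnonneg : ∀ p ∈ Finset.univ, (0:ℝ) ≤ x p * y p := by
    intro p _; rcases hterm p with h | h <;> simp [h]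
  by_cases hs : (∑ p, x p * y p) = 0
  · simp [hs]
  · have : (1:ℝ) ≤ ∑ p, x p * y p := by
      obtain ⟨p, hp⟩ : ∃ p, x p * y p ≠ 0 := by
        by_contra h
        push_neg at h
        exact hs (Finset.sum_eq_zero fun p _ => h p)
      have hp1 : x p * y p = 1 := (hterm p).resolve_left hp
      calc (1:ℝ) = x p * y p := hp1.symm
        _ ≤ ∑ p, x p * y p := Finset.single_le_sum hnonneg (Finset.mem_univ p)
    have : 1 - 2 * ∑ p, x p * y p ≤ 0 := by linarith
    simp [hs, max_eq_left this]

theorem relu_gradient_counts_orthogonal_pairs (d n m : ℕ)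
    (hd : 1 ≤ d) (hn : 1 ≤ n) (hm : 1 ≤ m)
    (a : Fin m → Fin d → ℝ) (b : Fin n → Fin d → ℝ)
    (ha01 : ∀ i l, a i l = 0 ∨ a i l = 1)
    (hb01 : ∀ i l, b i l = 0 ∨ b i l = 1)
    (l : ℝ → ℝ) (hl : DifferentiableAt ℝ l 0) :
    (∑ j : Fin n,
        fderiv ℝ
          (fun α : Fin n → ℝ =>
            ∑ i, l (∑ j', α j' * max 0 (1 - 2 * ∑ p, a i p * b j' p)))
          (0 : Fin n → ℝ) (Pi.single j 1))
      = deriv l 0 *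
          ((Finset.univ.filter
            (fun q : Fin m × Fin n => ∑ p, a q.1 p * b q.2 p = 0)).card : ℝ) ∧
    (∀ x y : Fin d → ℝ, (∀ p, x p = 0 ∨ x p = 1) → (∀ p, y p = 0 ∨ y p = 1) →
        max 0 (1 - 2 * ∑ p, x p * y p)
          = if (∑ p, x p * y p) = 0 then (1 : ℝ) else 0) := by
  constructor
  · set c : Fin m → Fin n → ℝ := fun i j => max 0 (1 - 2 * ∑ p, a i p * b j p) with hc
    -- the continuous linear map for each i
    set G : Fin m → (Fin n → ℝ) →L[ℝ] ℝ :=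
      fun i => ∑ j, c i j • ContinuousLinearMap.proj j with hG
    have hGapp : ∀ i (α : Fin n → ℝ), G i α = ∑ j', α j' * c i j' := by
      intro i α
      simp [hG, ContinuousLinearMap.sum_apply, mul_comm]
    have hG0 : ∀ i, G i (0 : Fin n → ℝ) = 0 := by
      intro i; simp [hGapp]
    have hD : HasFDerivAt
        (fun α : Fin n → ℝ =>
          ∑ i, l (∑ j', α j' * max 0 (1 - 2 * ∑ p, a i p * b j' p)))
        (∑ i, deriv l 0 • G i) (0 : Fin n → ℝ) := by
      apply HasFDerivAt.fun_sum
      intro i _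
      have h1 : HasDerivAt l (deriv l 0) (G i 0) := by
        rw [hG0]; exact hl.hasDerivAt
      have h2 : HasFDerivAt (fun α : Fin n → ℝ => G i α) (G i) 0 :=
        (G i).hasFDerivAt
      exact (h1.comp_hasFDerivAt 0 h2).congr_of_eventuallyEq
        (Filter.Eventually.of_forall fun α => by simp [Function.comp, hGapp, hc])
    rw [hD.fderiv]
    have key : ∀ j, (∑ i, deriv l 0 • G i) (Pi.single j 1) = ∑ i, deriv l 0 * c i j := by
      intro j
      rw [ContinuousLinearMap.sum_apply]
      congr 1; ext i
      rw [ContinuousLinearMap.smul_apply, hGapp]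
      simp [smul_eq_mul, Pi.single_apply, mul_comm]
    calc ∑ j, (∑ i, deriv l 0 • G i) (Pi.single j 1)
        = ∑ j, ∑ i, deriv l 0 * c i j := by
          exact Finset.sum_congr rfl fun j _ => key j
      _ = deriv l 0 * ∑ j : Fin n, ∑ i : Fin m, c i j := by
          rw [Finset.mul_sum]; congr 1; ext j; rw [Finset.mul_sum]
      _ = deriv l 0 * ((Finset.univ.filter
            (fun q : Fin m × Fin n => ∑ p, a q.1 p * b q.2 p = 0)).card : ℝ) := by
          congr 1
          rw [Finset.sum_comm]
          have : ∀ i j, c i j = if (∑ p, a i p * b j p) = 0 then (1:ℝ) else 0 := by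
            intro i j
            exact binary_relu d (a i) (b j) (ha01 i) (hb01 j)
          simp only [this]
          rw [← Fintype.sum_prod_type
            (f := fun q : Fin m × Fin n =>
              if ∑ p, a q.1 p * b q.2 p = 0 then (1:ℝ) else 0), Finset.sum_boole]
  · intro x y hx hy
    exact binary_relu d x y hx hy
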